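/- If H(p,q,d) is a line digraph (equivalently, it has no multiple arcs and the relation of sharing a common out-neighbor is an equivalence relation on its vertices), then d divides gcd(p,q). -/
import Mathlib


/-- The OTIS transpose map: for a = iq+j (0 ≤ i < p, 0 ≤ j < q), tau a = (q-1-j)p + (p-1-i). -/
def tau (p q a : ℕ) : ℕ := (q - 1 - a % q) * p + (p - 1 - a / q)

/-- Arc multiplicity from vertex u to vertex v in H(p,q,d). -/
def mult (p q d u v : ℕ) : ℕ :=
  ((Finset.range d).filter (fun r => tau p q (d * u + r) / d = v)).card

/-- There is an arc from u to v in H(p,q,d). -/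
def arc (p q d u v : ℕ) : Prop := ∃ r < d, tau p q (d * u + r) / d = v

namespace Otis13

lemma sub_sub_self' (m k : ℕ) (hk : k < m) : m - 1 - (m - 1 - k) = k := by omega

lemma div_char {q : ℕ} (i : ℕ) {j : ℕ} (hj : j < q) :
    (i * q + j) / q = i ∧ (i * q + j) % q = j := by
  have hq : 0 < q := Nat.lt_of_le_of_lt (Nat.zero_le _) hj
  have h1 : i * q + j = j + q * i := by ring
  constructor
  · rw [h1, Nat.add_mul_div_left _ _ hq, Nat.div_eq_of_lt hj]
    omega
  · rw [h1, Nat.add_mul_mod_self_left, Nat.mod_eq_of_lt hj]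

lemma tau_eval {q : ℕ} (p i : ℕ) {j : ℕ} (hj : j < q) :
    tau p q (i * q + j) = (q - 1 - j) * p + (p - 1 - i) := by
  unfold tau
  rw [(div_char i hj).1, (div_char i hj).2]

lemma tau_lt (p q a : ℕ) (hp : 0 < p) (hq : 0 < q) : tau p q a < p * q := by
  have h1 : (q - 1 - a % q) * p ≤ (q - 1) * p :=
    Nat.mul_le_mul_right _ (Nat.sub_le _ _)
  have h2 : (q - 1) * p = q * p - 1 * p := Nat.sub_mul q 1 p
  have h3 : 1 * p ≤ q * p := Nat.mul_le_mul_right _ hq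
  have h4 : q * p = p * q := Nat.mul_comm q p
  unfold tau
  generalize a / q = k
  omega

lemma tau_invol {p q : ℕ} (b : ℕ) (hb : b < q * p) : tau p q (tau q p b) = b := by
  have hp : 0 < p := by
    rcases Nat.eq_zero_or_pos p with h | h
    · subst h; simp at hb
    · exact h
  have hq : 0 < q := by
    rcases Nat.eq_zero_or_pos q with h | h
    · subst h; simp at hb
    · exact h
  have hdivlt : b / p < q := (Nat.div_lt_iff_lt_mul hp).mpr hb
  have hmodlt : b % p < p := Nat.mod_lt _ hp
  have hjq : q - 1 - b / p < q :=
    Nat.lt_of_le_of_lt (Nat.sub_le _ _) (Nat.sub_lt hq Nat.one_pos)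
  have h0 : tau q p b = (p - 1 - b % p) * q + (q - 1 - b / p) := rfl
  rw [h0, tau_eval p (p - 1 - b % p) hjq,
      sub_sub_self' q (b / p) hdivlt, sub_sub_self' p (b % p) hmodlt]
  have h5 := Nat.div_add_mod b p
  have h6 : b / p * p = p * (b / p) := Nat.mul_comm _ _
  omega

lemma key (p q d : ℕ) (hp : 1 < p) (hq : 1 < q) (hd : 1 < d) (hdiv : d ∣ p * q)
    (hnm : ∀ u < p * q / d, ∀ r < d, ∀ r' < d,
        tau p q (d * u + r) / d = tau p q (d * u + r') / d → r = r')
    (hh : ∀ u v w x : ℕ, u < p * q / d → v < p * q / d → w < p * q / d →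
      x < p * q / d → arc p q d u w → arc p q d v w → arc p q d v x → arc p q d u x) :
    d ∣ q := by
  obtain ⟨n, hn⟩ := hdiv
  have hd0 : 0 < d := by omega
  have hp0 : 0 < p := by omega
  have hq0 : 0 < q := by omega
  have hnd : p * q / d = n := by rw [hn, Nat.mul_div_cancel_left n hd0]
  have hpq4 : 4 ≤ p * q := by
    have := Nat.mul_le_mul (show 2 ≤ p by omega) (show 2 ≤ q by omega)
    omega
  have hn1 : 1 ≤ n := by
    rcases Nat.eq_zero_or_pos n with h | h
    · subst h; simp at hn; omega
    · exact h
  have hmulsub : d * (n - 1) + d = d * n := by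
    have h' : n - 1 + 1 = n := by omega
    calc d * (n - 1) + d = d * ((n - 1) + 1) := by ring
      _ = d * n := by rw [h']
  -- basic tau evaluations
  have h2p : (q - 1) * p = q * p - 1 * p := Nat.sub_mul q 1 p
  have h3p : 1 * p ≤ q * p := Nat.mul_le_mul_right _ hq0
  have h4p : q * p = p * q := Nat.mul_comm q p
  have tau0 : tau p q 0 = p * q - 1 := by
    have h : tau p q 0 = (q - 1) * p + (p - 1) := by simp [tau]
    omega
  have tauq : tau p q q = p * q - 2 := by
    have h : tau p q q = (q - 1) * p + (p - 1 - 1) := by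
      simp [tau, Nat.mod_self, Nat.div_self hq0]
    omega
  have hsubmul : (p - 1) * q = p * q - 1 * q := Nat.sub_mul p 1 q
  have hqle : 1 * q ≤ p * q := Nat.mul_le_mul_right _ hp0
  have tauL : tau p q (p * q - 1) = 0 := by
    have e : p * q - 1 = (p - 1) * q + (q - 1) := by omega
    rw [e, tau_eval p (p - 1) (show q - 1 < q by omega)]
    simp
  have tauL2 : tau p q (p * q - 2) = p := by
    have e : p * q - 2 = (p - 1) * q + (q - 2) := by omega
    rw [e, tau_eval p (p - 1) (show q - 2 < q by omega)]
    have e1 : q - 1 - (q - 2) = 1 := by omega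
    have e2 : p - 1 - (p - 1) = 0 := by omega
    rw [e1, e2, one_mul]
    omega
  -- block facts
  have blkL : (p * q - 1) / d = n - 1 := by
    have e : p * q - 1 = (d - 1) + d * (n - 1) := by omega
    rw [e, Nat.add_mul_div_left _ _ hd0, Nat.div_eq_of_lt (show d - 1 < d by omega)]
    omega
  have blk2 : (p * q - 2) / d = n - 1 := by
    have e : p * q - 2 = (d - 2) + d * (n - 1) := by omega
    rw [e, Nat.add_mul_div_left _ _ hd0, Nat.div_eq_of_lt (show d - 2 < d by omega)]
    omega
  by_cases hqd : q < d
  · exfalso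
    have heq : tau p q (d * 0 + 0) / d = tau p q (d * 0 + q) / d := by
      rw [show d * 0 + 0 = 0 from by ring, show d * 0 + q = q from by ring,
        tau0, tauq, blkL, blk2]
    have := hnm 0 (by omega) 0 hd0 q hqd heq
    omega
  by_cases hpd : p < d
  · exfalso
    have a1 : d * (n - 1) + (d - 1) = p * q - 1 := by omega
    have a2 : d * (n - 1) + (d - 2) = p * q - 2 := by omega
    have heq : tau p q (d * (n - 1) + (d - 1)) / d
        = tau p q (d * (n - 1) + (d - 2)) / d := by
      rw [a1, a2, tauL, tauL2, Nat.zero_div, Nat.div_eq_of_lt hpd]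
    have := hnm (n - 1) (by omega) (d - 1) (by omega) (d - 2) (by omega) heq
    omega
  -- now d ≤ p and d ≤ q
  push_neg at hqd hpd
  by_cases hdq : d ∣ q
  · exact hdq
  exfalso
  have hρ1 : 1 ≤ q % d := Nat.pos_of_ne_zero (fun h => hdq (Nat.dvd_of_mod_eq_zero h))
  have hq1 : 1 ≤ q / d := (Nat.one_le_div_iff hd0).mpr hqd
  obtain ⟨V, ρ, hsum, h1ρ, hρltd, h1V⟩ :
      ∃ V ρ, d * V + ρ = q ∧ 1 ≤ ρ ∧ ρ < d ∧ 1 ≤ V :=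
    ⟨q / d, q % d, Nat.div_add_mod q d, hρ1, Nat.mod_lt _ hd0, hq1⟩
  have hdV : d ≤ d * V := by
    have := Nat.mul_le_mul_left d h1V
    omega
  have h2q : 2 * q ≤ p * q := Nat.mul_le_mul_right q (show 2 ≤ p by omega)
  have hVn : V < n := by
    apply Nat.lt_of_mul_lt_mul_left (a := d)
    omega
  have hT : tau p q (q - ρ) = (ρ - 1) * p + (p - 1) := by
    have hlt : q - ρ < q := Nat.sub_lt hq0 h1ρ
    have h := tau_eval p 0 hlt
    simp only [zero_mul, zero_add, Nat.sub_zero] at h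
    have esub : q - 1 - (q - ρ) = ρ - 1 := by omega
    rw [esub] at h
    exact h
  have hTlt : (ρ - 1) * p + (p - 1) < p * q := by
    have := tau_lt p q (q - ρ) hp0 hq0
    rw [hT] at this
    exact this
  have hX1 : d * (((ρ - 1) * p + (p - 1)) / d) ≤ (ρ - 1) * p + (p - 1) := by
    have h := Nat.div_mul_le_self ((ρ - 1) * p + (p - 1)) d
    have h' : ((ρ - 1) * p + (p - 1)) / d * d = d * (((ρ - 1) * p + (p - 1)) / d) :=
      Nat.mul_comm _ _
    omega
  have hxn : ((ρ - 1) * p + (p - 1)) / d < n := by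
    apply Nat.lt_of_mul_lt_mul_left (a := d)
    omega
  have arc1 : arc p q d 0 (n - 1) :=
    ⟨0, hd0, by rw [show d * 0 + 0 = 0 from by ring, tau0, blkL]⟩
  have arc2 : arc p q d V (n - 1) :=
    ⟨ρ, hρltd, by rw [hsum, tauq, blk2]⟩
  have arc3 : arc p q d V (((ρ - 1) * p + (p - 1)) / d) :=
    ⟨0, hd0, by rw [show d * V + 0 = q - ρ from by omega, hT]⟩
  obtain ⟨t, htd, htx⟩ := hh 0 V (n - 1) (((ρ - 1) * p + (p - 1)) / d)
    (by omega) (by omega) (by omega) (by omega) arc1 arc2 arc3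
  have ht' : tau p q (d * 0 + t) = (q - 1 - t) * p + (p - 1) := by
    rw [show d * 0 + t = 0 * q + t from by ring, tau_eval p 0 (show t < q by omega)]
    simp
  rw [ht'] at htx
  have hsplit : (q - 1 - t) * p = (ρ - 1) * p + (q - t - ρ) * p := by
    rw [← Nat.add_mul]
    congr 1
    omega
  have hple : 1 * p ≤ (q - t - ρ) * p := Nat.mul_le_mul_right p (by omega)
  have hAm := Nat.div_add_mod ((q - 1 - t) * p + (p - 1)) d
  have hAmod : ((q - 1 - t) * p + (p - 1)) % d < d := Nat.mod_lt _ hd0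
  rw [htx] at hAm
  omega

lemma nomult_to_hnm (p q d : ℕ) (h : ∀ u < p * q / d, ∀ v : ℕ, mult p q d u v ≤ 1) :
    ∀ u < p * q / d, ∀ r < d, ∀ r' < d,
      tau p q (d * u + r) / d = tau p q (d * u + r') / d → r = r' := by
  intro u hu r hr r' hr' he
  by_contra hne
  have h2 : 1 < ((Finset.range d).filter
      (fun s => tau p q (d * u + s) / d = tau p q (d * u + r) / d)).card := by
    apply Finset.one_lt_card.mpr
    refine ⟨r, ?_, r', ?_, hne⟩
    · simp [Finset.mem_filter, Finset.mem_range, hr]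
    · simp only [Finset.mem_filter, Finset.mem_range]
      exact ⟨hr', he.symm⟩
  have h3 := h u hu (tau p q (d * u + r) / d)
  unfold mult at h3
  omega

lemma hnm_swap (p q d : ℕ) (hp : 0 < p) (hq : 0 < q) (hd : 0 < d) (hdiv : d ∣ p * q)
    (hnm : ∀ u < p * q / d, ∀ r < d, ∀ r' < d,
        tau p q (d * u + r) / d = tau p q (d * u + r') / d → r = r') :
    ∀ u < q * p / d, ∀ r < d, ∀ r' < d,
      tau q p (d * u + r) / d = tau q p (d * u + r') / d → r = r' := by
  intro u hu r hr r' hr' he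
  have hqp : d ∣ q * p := by rw [mul_comm]; exact hdiv
  have hmulqp : d * (q * p / d) = q * p := Nat.mul_div_cancel' hqp
  have hmulpq : d * (p * q / d) = p * q := Nat.mul_div_cancel' hdiv
  have hcomm : q * p = p * q := Nat.mul_comm q p
  have hstep : d * (u + 1) ≤ d * (q * p / d) := Nat.mul_le_mul_left d (by omega)
  have hdist : d * (u + 1) = d * u + d := by ring
  have hb : d * u + r < q * p := by omega
  have hb' : d * u + r' < q * p := by omega
  have ha : tau p q (tau q p (d * u + r)) = d * u + r := tau_invol _ hb
  have ha' : tau p q (tau q p (d * u + r')) = d * u + r' := tau_invol _ hb'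
  have haltpq : tau q p (d * u + r) < q * p := tau_lt q p _ hq hp
  have h1 : d * (tau q p (d * u + r) / d) ≤ tau q p (d * u + r) := by
    have h := Nat.div_mul_le_self (tau q p (d * u + r)) d
    have h' : tau q p (d * u + r) / d * d = d * (tau q p (d * u + r) / d) :=
      Nat.mul_comm _ _
    omega
  have hvlt : tau q p (d * u + r) / d < p * q / d := by
    apply Nat.lt_of_mul_lt_mul_left (a := d)
    omega
  have hbeq : d * (tau q p (d * u + r) / d) + tau q p (d * u + r) % d
      = tau q p (d * u + r) := Nat.div_add_mod _ _
  have hbeq' : d * (tau q p (d * u + r') / d) + tau q p (d * u + r') % d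
      = tau q p (d * u + r') := Nat.div_add_mod _ _
  have hu_div : (d * u + r) / d = u := by
    rw [Nat.mul_add_div hd, Nat.div_eq_of_lt hr]
    omega
  have hu_div' : (d * u + r') / d = u := by
    rw [Nat.mul_add_div hd, Nat.div_eq_of_lt hr']
    omega
  have harg : tau p q (d * (tau q p (d * u + r) / d) + tau q p (d * u + r) % d) / d
      = tau p q (d * (tau q p (d * u + r) / d) + tau q p (d * u + r') % d) / d := by
    rw [hbeq, he, hbeq', ha, ha', hu_div, hu_div']
  have hs := hnm (tau q p (d * u + r) / d) hvlt (tau q p (d * u + r) % d)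
    (Nat.mod_lt _ hd) (tau q p (d * u + r') % d) (Nat.mod_lt _ hd) harg
  rw [he] at hbeq
  have heqb : tau q p (d * u + r) = tau q p (d * u + r') := by omega
  have hfin : d * u + r = d * u + r' := by rw [← ha, ← ha', heqb]
  omega

lemma arc_flip (p q d u w : ℕ) (hp : 0 < p) (hq : 0 < q) (hd : 0 < d)
    (hdiv : d ∣ p * q) (hu : u < p * q / d) :
    arc p q d u w → arc q p d w u := by
  rintro ⟨r, hr, hrw⟩
  have hmulpq : d * (p * q / d) = p * q := Nat.mul_div_cancel' hdiv
  have hstep : d * (u + 1) ≤ d * (p * q / d) := Nat.mul_le_mul_left d (by omega)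
  have hdist : d * (u + 1) = d * u + d := by ring
  have ha : d * u + r < p * q := by omega
  refine ⟨tau p q (d * u + r) % d, Nat.mod_lt _ hd, ?_⟩
  have hbm : d * (tau p q (d * u + r) / d) + tau p q (d * u + r) % d
      = tau p q (d * u + r) := Nat.div_add_mod _ _
  rw [hrw] at hbm
  rw [hbm]
  have hinv : tau q p (tau p q (d * u + r)) = d * u + r :=
    tau_invol (p := q) (q := p) _ ha
  rw [hinv, Nat.mul_add_div hd, Nat.div_eq_of_lt hr]
  omega

end Otis13

theorem stmt_13 (p q d : ℕ) (hp : 1 < p) (hq : 1 < q) (hd : 1 < d) (hdiv : d ∣ p * q)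
    (hnomult : ∀ u < p * q / d, ∀ v : ℕ, mult p q d u v ≤ 1)
    (hheuchenne : ∀ u v w x : ℕ, u < p * q / d → v < p * q / d → w < p * q / d →
      x < p * q / d → arc p q d u w → arc p q d v w → arc p q d v x → arc p q d u x) :
    d ∣ Nat.gcd p q := by
  have hd0 : 0 < d := by omega
  have hp0 : 0 < p := by omega
  have hq0 : 0 < q := by omega
  have hnm1 := Otis13.nomult_to_hnm p q d hnomult
  have hkey1 : d ∣ q := Otis13.key p q d hp hq hd hdiv hnm1 hheuchenne
  have hdiv' : d ∣ q * p := by rw [mul_comm]; exact hdiv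
  have hnm2 := Otis13.hnm_swap p q d hp0 hq0 hd0 hdiv hnm1
  have hdiveq : q * p / d = p * q / d := by rw [mul_comm q p]
  have hh2 : ∀ u v w x : ℕ, u < q * p / d → v < q * p / d → w < q * p / d →
      x < q * p / d → arc q p d u w → arc q p d v w → arc q p d v x → arc q p d u x := by
    intro u v w x hu hv hw hx h1 h2 h3
    have f1 : arc p q d w u := Otis13.arc_flip q p d u w hq0 hp0 hd0 hdiv' hu h1
    have f2 : arc p q d w v := Otis13.arc_flip q p d v w hq0 hp0 hd0 hdiv' hv h2
    have f3 : arc p q d x v := Otis13.arc_flip q p d v x hq0 hp0 hd0 hdiv' hv h3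
    have f4 : arc p q d x u := hheuchenne x w v u (by omega) (by omega) (by omega)
      (by omega) f3 f2 f1
    exact Otis13.arc_flip p q d x u hp0 hq0 hd0 hdiv (by omega) f4
  have hkey2 : d ∣ p := Otis13.key q p d hq hp hd hdiv' hnm2 hh2
  exact Nat.dvd_gcd hkey2 hkey1
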